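/- Let β_i = 2^i B_i / i! with B_i the Bernoulli numbers (B_1 = -1/2), and c_i = (1 - 2^{1-i}) β_i. Then for every nonnegative integer k, Σ_{i=0}^k c_i/(k-i)! = (-1)^{k-1} β_k. -/

import Mathlib

open PowerSeries

/-- `β_i = 2^i B_i / i!` with `B_i` the Bernoulli numbers (`B_1 = -1/2`). -/
noncomputable def betaCoeff (i : ℕ) : ℚ := 2 ^ i * bernoulli i / (i.factorial : ℚ)

/-- `c_i = (1 - 2^{1-i}) β_i`. -/
noncomputable def cCoeff (i : ℕ) : ℚ := (1 - (2 : ℚ) ^ ((1 : ℤ) - i)) * betaCoeff i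


noncomputable def E : ℚ⟦X⟧ := PowerSeries.exp ℚ
noncomputable def B : ℚ⟦X⟧ := bernoulliPowerSeries ℚ

lemma hE2 : PowerSeries.rescale (2:ℚ) E = E * E := by
  have := PowerSeries.exp_mul_exp_eq_exp_add (1:ℚ) 1
  norm_num [PowerSeries.rescale_one] at this
  rw [E, ← this]

lemma hEneg : PowerSeries.rescale (-2:ℚ) E * (E * E) = 1 := by
  rw [← hE2]
  have := PowerSeries.exp_mul_exp_eq_exp_add (-2:ℚ) 2
  norm_num [PowerSeries.rescale_zero] at this
  rw [E, this]

lemma key : (PowerSeries.rescale (2:ℚ) B - 2 * B) * E = - PowerSeries.rescale (-2:ℚ) B := by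
  have h1 : B * (E - 1) = X := bernoulliPowerSeries_mul_exp_sub_one ℚ
  have h2 : PowerSeries.rescale (2:ℚ) B * (E * E - 1) = PowerSeries.C (R := ℚ) 2 * X := by
    have := congrArg (PowerSeries.rescale (2:ℚ)) h1
    rw [map_mul, map_sub, map_one, hE2, PowerSeries.rescale_X] at this
    exact this
  have h3 : PowerSeries.rescale (-2:ℚ) B * (PowerSeries.rescale (-2:ℚ) E - 1)
      = PowerSeries.C (R := ℚ) (-2) * X := by
    have := congrArg (PowerSeries.rescale (-2:ℚ)) h1
    rw [map_mul, map_sub, map_one, PowerSeries.rescale_X] at this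
    exact this
  have h4 : PowerSeries.rescale (-2:ℚ) B * (E * E - 1) = - (PowerSeries.C (R := ℚ) (-2) * X) * (E * E) := by
    have := congrArg (· * (E * E)) h3
    simp only [mul_sub, mul_one, sub_mul, mul_assoc, hEneg] at this
    linear_combination -this
  have hne : (E * E - 1) * (E - 1) ≠ 0 := by
    apply mul_ne_zero <;> intro h <;> [skip; skip] <;>
      · have := congrArg (PowerSeries.coeff (R := ℚ) 1) h
        simp [E, PowerSeries.coeff_exp, PowerSeries.coeff_mul,
          Finset.Nat.sum_antidiagonal_succ] at this
  apply mul_right_cancel₀ hne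
  have expand : ((PowerSeries.rescale (2:ℚ) B - 2 * B) * E) * ((E * E - 1) * (E - 1))
      = (PowerSeries.rescale (2:ℚ) B * (E * E - 1)) * (E * (E - 1))
        - 2 * (B * (E - 1)) * (E * (E * E - 1)) := by ring
  have expand2 : (- PowerSeries.rescale (-2:ℚ) B) * ((E * E - 1) * (E - 1))
      = -(PowerSeries.rescale (-2:ℚ) B * (E * E - 1)) * (E - 1) := by ring
  rw [expand, h2, h1, expand2, h4]
  simp only [map_neg, map_ofNat]
  ring

lemma cCoeff_eq (i : ℕ) :
    cCoeff i = PowerSeries.coeff (R := ℚ) i (PowerSeries.rescale (2:ℚ) B - 2 * B) := by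
  have h2 : (2:ℚ) ^ ((1:ℤ) - i) = 2 / 2 ^ i := by
    rw [zpow_sub₀ (by norm_num), zpow_one, zpow_natCast]
  simp only [cCoeff, betaCoeff, map_sub, PowerSeries.coeff_rescale, B, bernoulliPowerSeries,
    PowerSeries.coeff_mk, Algebra.algebraMap_self, RingHom.id_apply, h2]
  have : (2 : ℚ⟦X⟧) = PowerSeries.C (R := ℚ) 2 := (map_ofNat (PowerSeries.C (R := ℚ)) 2).symm
  rw [this, PowerSeries.coeff_C_mul, PowerSeries.coeff_mk]
  have hf : ((i.factorial : ℚ)) ≠ 0 := Nat.cast_ne_zero.mpr i.factorial_ne_zero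
  field_simp

lemma beta_eq (k : ℕ) :
    (-1 : ℚ) ^ ((k : ℤ) - 1) * betaCoeff k
      = PowerSeries.coeff (R := ℚ) k (- PowerSeries.rescale (-2:ℚ) B) := by
  have h1 : (-1:ℚ) ^ ((k:ℤ) - 1) = -(-1)^k := by
    rw [zpow_sub₀ (by norm_num), zpow_one, zpow_natCast]; ring
  simp only [map_neg, PowerSeries.coeff_rescale, B, bernoulliPowerSeries, PowerSeries.coeff_mk,
    Algebra.algebraMap_self, RingHom.id_apply, h1, betaCoeff]
  rw [show ((-2:ℚ)) ^ k = (-1) ^ k * 2 ^ k from neg_pow 2 k]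
  ring

theorem stmt4 (k : ℕ) :
    ∑ i ∈ Finset.range (k + 1), cCoeff i / ((k - i).factorial : ℚ)
      = (-1 : ℚ) ^ ((k : ℤ) - 1) * betaCoeff k := by
  rw [beta_eq, ← key, PowerSeries.coeff_mul,
    Finset.Nat.sum_antidiagonal_eq_sum_range_succ_mk]
  refine Finset.sum_congr rfl fun i hi => ?_
  rw [← cCoeff_eq]
  simp [E, PowerSeries.coeff_exp, div_eq_mul_inv]
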